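/- Let Ω ⊆ ℝⁿ be an open bounded convex set and let u : closure(Ω) → ℝ be a continuous function with u = 0 on ∂Ω, u > 0 on Ω, and log u concave on Ω. Fix ε > 0 and set ρ(ε) := 2√(ε·sup_Ω |u|). If x ∈ Ω satisfies dist(x, ∂Ω) > ρ(ε), the sup-convolution u^ε is differentiable at x, and ∇u^ε(x) = 0, then u(x) = max_{closure(Ω)} u. -/

import Mathlib

open Set Metric

/-- The sup-convolution `u^ε` of a function `u : Ω → ℝ`. -/
noncomputable def supConv {n : ℕ} (ε : ℝ) (Ω : Set (EuclideanSpace ℝ (Fin n)))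
    (u : EuclideanSpace ℝ (Fin n) → ℝ) (x : EuclideanSpace ℝ (Fin n)) : ℝ :=
  sSup ((fun y => u y - ‖x - y‖ ^ 2 / (2 * ε)) '' Ω)

/-- The radius `ρ(ε) = 2 √(ε ⬝ sup_Ω |u|)`. -/
noncomputable def rho {n : ℕ} (ε : ℝ) (Ω : Set (EuclideanSpace ℝ (Fin n)))
    (u : EuclideanSpace ℝ (Fin n) → ℝ) : ℝ :=
  2 * Real.sqrt (ε * sSup ((fun y => |u y|) '' Ω))

theorem supConv_critical_point_is_max
    {n : ℕ} (Ω : Set (EuclideanSpace ℝ (Fin n)))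
    (hΩopen : IsOpen Ω) (hΩbdd : Bornology.IsBounded Ω) (hΩconv : Convex ℝ Ω)
    (u : EuclideanSpace ℝ (Fin n) → ℝ)
    (hu : ContinuousOn u (closure Ω))
    (hu0 : ∀ x ∈ frontier Ω, u x = 0)
    (hupos : ∀ x ∈ Ω, 0 < u x)
    (hlogconc : ConcaveOn ℝ Ω (fun x => Real.log (u x)))
    (ε : ℝ) (hε : 0 < ε)
    (x : EuclideanSpace ℝ (Fin n)) (hx : x ∈ Ω)
    (hdist : rho ε Ω u < Metric.infDist x (frontier Ω))
    (hdiff : DifferentiableAt ℝ (supConv ε Ω u) x)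
    (hgrad : gradient (supConv ε Ω u) x = 0) :
    u x = sSup (u '' closure Ω) := by
  have hne : Ω.Nonempty := ⟨x, hx⟩
  have hxcl : x ∈ closure Ω := subset_closure hx
  have hux : 0 < u x := hupos x hx
  have hK : IsCompact (closure Ω) :=
    Metric.isCompact_of_isClosed_isBounded isClosed_closure hΩbdd.closure
  -- bound for |u| on the closure
  obtain ⟨w, hwK, hwmax⟩ := hK.exists_isMaxOn ⟨x, hxcl⟩ hu.abs
  set B := |u w| with hB
  have hUB : ∀ y ∈ closure Ω, |u y| ≤ B := fun y hy => hwmax hy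
  have hbddAbs : BddAbove ((fun y => |u y|) '' Ω) := by
    refine ⟨B, ?_⟩; rintro a ⟨y, hy, rfl⟩; exact hUB y (subset_closure hy)
  have hbddg : ∀ z, BddAbove ((fun y => u y - ‖z - y‖ ^ 2 / (2 * ε)) '' Ω) := by
    intro z
    refine ⟨B, ?_⟩; rintro a ⟨y, hy, rfl⟩
    have h1 := hUB y (subset_closure hy)
    have h2 : 0 ≤ ‖z - y‖ ^ 2 / (2 * ε) := by positivity
    have h3 := le_abs_self (u y)
    linarith
  -- elements of the closure of a set are at most its sSup
  have hclle : ∀ (S : Set ℝ), BddAbove S → ∀ a ∈ closure S, a ≤ sSup S := fun S hb a ha =>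
    (closure_minimal (fun y hy => le_csSup hb hy) isClosed_Iic) ha
  set M := sSup ((fun y => |u y|) '' Ω) with hMdef
  have hM : ∀ y ∈ closure Ω, |u y| ≤ M := by
    intro y hy
    exact hclle _ hbddAbs _ (hu.abs.image_closure (mem_image_of_mem _ hy))
  have hM0 : 0 ≤ M := le_trans (abs_nonneg (u x)) (hM x hxcl)
  -- a maximizer of g on the closure
  set g := fun y => u y - ‖x - y‖ ^ 2 / (2 * ε) with hgdef
  have hgc : ContinuousOn g (closure Ω) := by
    exact hu.sub ((((continuous_const.sub continuous_id).norm.pow 2).div_const _).continuousOn)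
  obtain ⟨y₀, hy₀K, hy₀max⟩ := hK.exists_isMaxOn ⟨x, hxcl⟩ hgc
  have hsupx : supConv ε Ω u x = g y₀ := by
    refine le_antisymm (csSup_le (hne.image _) ?_) ?_
    · rintro a ⟨y, hy, rfl⟩; exact hy₀max (subset_closure hy)
    · exact hclle _ (hbddg x) _ (hgc.image_closure (mem_image_of_mem _ hy₀K))
  have hgy₀ : u x ≤ g y₀ := by
    have h := hy₀max hxcl
    simpa [g] using h
  -- y₀ is within distance rho of x
  have hdy : dist x y₀ ≤ rho ε Ω u := by
    have h1 : ‖x - y₀‖ ^ 2 ≤ 4 * (ε * M) := by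
      have h2 : u y₀ ≤ M := le_trans (le_abs_self _) (hM y₀ hy₀K)
      have h3 : u x ≤ u y₀ - ‖x - y₀‖ ^ 2 / (2 * ε) := hgy₀
      have h4 : ‖x - y₀‖ ^ 2 / (2 * ε) ≤ M := by linarith
      have h5 : 0 < 2 * ε := by linarith
      rw [div_le_iff₀ h5] at h4
      nlinarith
    rw [dist_eq_norm, rho]
    have h6 : ‖x - y₀‖ = Real.sqrt (‖x - y₀‖ ^ 2) := (Real.sqrt_sq (norm_nonneg _)).symm
    rw [h6]
    calc Real.sqrt (‖x - y₀‖ ^ 2) ≤ Real.sqrt (4 * (ε * M)) := Real.sqrt_le_sqrt h1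
      _ = 2 * Real.sqrt (ε * M) := by
          rw [show (4 : ℝ) * (ε * M) = 2 ^ 2 * (ε * M) by ring, Real.sqrt_mul (by positivity),
            Real.sqrt_sq (by norm_num : (0:ℝ) ≤ 2)]
  have hy₀Ω : y₀ ∈ Ω := by
    by_contra h
    have hfr : y₀ ∈ frontier Ω := by
      rw [frontier, hΩopen.interior_eq]; exact ⟨hy₀K, h⟩
    have h2 : Metric.infDist x (frontier Ω) ≤ dist x y₀ :=
      Metric.infDist_le_dist_of_mem hfr
    linarith
  -- the touching paraboloid is below supConv
  have hφle : ∀ z, u y₀ - ‖z - y₀‖ ^ 2 / (2 * ε) ≤ supConv ε Ω u z := fun z =>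
    le_csSup (hbddg z) (mem_image_of_mem _ hy₀Ω)
  -- derivative of the paraboloid
  have hd1 : HasFDerivAt (fun z : EuclideanSpace ℝ (Fin n) => ‖z - y₀‖ ^ 2)
      (2 • (innerSL ℝ (x - y₀)).comp (ContinuousLinearMap.id ℝ _)) x := by
    have := ((hasFDerivAt_id x).sub_const y₀).norm_sq
    simpa using this
  have hd2 : HasFDerivAt (fun z : EuclideanSpace ℝ (Fin n) => u y₀ - ‖z - y₀‖ ^ 2 / (2 * ε))
      (-((2 * ε)⁻¹ • (2 • (innerSL ℝ (x - y₀)).comp (ContinuousLinearMap.id ℝ _)))) x := by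
    have hfun : (fun z : EuclideanSpace ℝ (Fin n) => u y₀ - ‖z - y₀‖ ^ 2 / (2 * ε))
        = fun z => u y₀ - (2 * ε)⁻¹ * ‖z - y₀‖ ^ 2 := by
      funext z; rw [div_eq_inv_mul]
    rw [hfun]
    exact (hd1.const_mul ((2 * ε)⁻¹)).const_sub (u y₀)
  -- fderiv of supConv is zero
  have hf0 : HasFDerivAt (supConv ε Ω u) (0 : EuclideanSpace ℝ (Fin n) →L[ℝ] ℝ) x := by
    have h1 := hdiff.hasGradientAt
    rw [hgrad] at h1
    have h2 := h1.hasFDerivAt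
    simpa using h2
  -- the difference has a local min at x
  have hloc : IsLocalMin (fun z => supConv ε Ω u z -
      (u y₀ - ‖z - y₀‖ ^ 2 / (2 * ε))) x := by
    refine Filter.Eventually.of_forall fun z => ?_
    have h1 := hφle z
    have h2 : supConv ε Ω u x - (u y₀ - ‖x - y₀‖ ^ 2 / (2 * ε)) = 0 := by
      rw [hsupx]; simp [g]
    linarith
  have hder0 := hloc.hasFDerivAt_eq_zero (hf0.sub hd2)
  -- hence y₀ = x
  have hy₀x : y₀ = x := by
    have hφ'0 : ((2 * ε)⁻¹ • (2 • (innerSL ℝ (x - y₀)).comp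
        (ContinuousLinearMap.id ℝ (EuclideanSpace ℝ (Fin n))))) = 0 := by
      have h := hder0
      rwa [zero_sub, neg_neg] at h
    have h2 := congrFun (congrArg DFunLike.coe hφ'0) (x - y₀)
    simp only [ContinuousLinearMap.smul_apply, ContinuousLinearMap.coe_smul',
      Pi.smul_apply, ContinuousLinearMap.coe_comp', Function.comp_apply,
      ContinuousLinearMap.coe_id', id_eq, innerSL_apply_apply, ContinuousLinearMap.zero_apply,
      smul_eq_mul, two_smul, ContinuousLinearMap.add_apply] at h2
    have hr : (inner ℝ (x - y₀) (x - y₀) : ℝ) = 0 := by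
      rcases mul_eq_zero.1 h2 with h | h
      · exact absurd h (by positivity)
      · linarith
    have h3 : x - y₀ = 0 := by rwa [inner_self_eq_zero] at hr
    exact (sub_eq_zero.1 h3).symm
  -- key inequality: u y ≤ u x + ‖x-y‖²/(2ε) on Ω
  have hkey : ∀ y ∈ Ω, u y - ‖x - y‖ ^ 2 / (2 * ε) ≤ u x := by
    intro y hy
    have h1 : u y - ‖x - y‖ ^ 2 / (2 * ε) ≤ supConv ε Ω u x :=
      le_csSup (hbddg x) (mem_image_of_mem _ hy)
    rw [hsupx, hy₀x] at h1
    simpa [g] using h1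
  -- u x is a max on the closure
  have hmax : ∀ y ∈ closure Ω, u y ≤ u x := by
    intro y hy
    by_cases hyΩ : y ∈ Ω
    · by_contra hlt
      push_neg at hlt
      have huy : 0 < u y := hupos y hyΩ
      set c := Real.log (u y) - Real.log (u x) with hcdef
      have hc : 0 < c := sub_pos.2 (Real.log_lt_log hux hlt)
      have hxy : x ≠ y := by rintro rfl; exact lt_irrefl _ hlt
      have hd : 0 < ‖x - y‖ := by
        rw [norm_pos_iff]; exact sub_ne_zero.2 hxy
      obtain ⟨t, ht0, ht1, ht2⟩ : ∃ t : ℝ, 0 < t ∧ t ≤ 1 ∧ t * ‖x - y‖ ^ 2 ≤ ε * u x * c := by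
        refine ⟨min 1 (ε * u x * c / ‖x - y‖ ^ 2), lt_min one_pos (by positivity),
          min_le_left _ _, ?_⟩
        have h := min_le_right 1 (ε * u x * c / ‖x - y‖ ^ 2)
        have h' := mul_le_mul_of_nonneg_right h (by positivity : (0:ℝ) ≤ ‖x - y‖ ^ 2)
        rwa [div_mul_cancel₀ _ (by positivity : (‖x - y‖ ^ 2 : ℝ) ≠ 0)] at h'
      set p := (1 - t) • x + t • y with hpdef
      have hpΩ : p ∈ Ω := hΩconv hx hyΩ (by linarith) ht0.le (by ring)
      have hlc := hlogconc.2 hx hyΩ (by linarith : (0:ℝ) ≤ 1 - t) ht0.le (by ring)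
      have hup : u x * Real.exp (t * c) ≤ u p := by
        have h2 : Real.log (u x) + t * c ≤ Real.log (u p) := by
          have h3 : (1 - t) * Real.log (u x) + t * Real.log (u y)
              = Real.log (u x) + t * c := by rw [hcdef]; ring
          have h4 : (1 - t) • Real.log (u x) + t • Real.log (u y)
              ≤ Real.log (u p) := hlc
          simpa [smul_eq_mul, h3] using h4
        calc u x * Real.exp (t * c) = Real.exp (Real.log (u x) + t * c) := by
              rw [Real.exp_add, Real.exp_log hux]
          _ ≤ Real.exp (Real.log (u p)) := Real.exp_le_exp.2 h2
          _ = u p := Real.exp_log (hupos p hpΩ)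
      have hxp : ‖x - p‖ = t * ‖x - y‖ := by
        have h5 : x - p = t • (x - y) := by
          rw [hpdef]; module
        rw [h5, norm_smul, Real.norm_eq_abs, abs_of_pos ht0]
      have h6 : u p - ‖x - p‖ ^ 2 / (2 * ε) ≤ u x := hkey p hpΩ
      have h7 : 1 + t * c ≤ Real.exp (t * c) := by
        have := Real.add_one_le_exp (t * c)
        linarith
      -- combine: u x * t * c ≤ t² ‖x-y‖² / (2ε)
      clear_value c p
      have h9 : ‖x - p‖ ^ 2 = t ^ 2 * ‖x - y‖ ^ 2 := by rw [hxp]; ring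
      have h10 : u x * (1 + t * c) ≤ u x * Real.exp (t * c) :=
        mul_le_mul_of_nonneg_left h7 hux.le
      rw [h9] at h6
      have h8 : u x * (t * c) ≤ t ^ 2 * ‖x - y‖ ^ 2 / (2 * ε) := by
        linarith [h6, hup, h10]
      have h13 : t ^ 2 * ‖x - y‖ ^ 2 ≤ t * (ε * u x * c) := by
        have h' := mul_le_mul_of_nonneg_left ht2 ht0.le
        linarith [h']
      have h14 : t ^ 2 * ‖x - y‖ ^ 2 / (2 * ε) ≤ t * u x * c / 2 := by
        rw [div_le_div_iff₀ (by positivity : (0:ℝ) < 2 * ε) (by norm_num : (0:ℝ) < 2)]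
        linarith [h13]
      linarith [h8, h14, mul_pos (mul_pos hux ht0) hc]
    · have hfr : y ∈ frontier Ω := by
        rw [frontier, hΩopen.interior_eq]; exact ⟨hy, hyΩ⟩
      rw [hu0 y hfr]
      exact hux.le
  refine le_antisymm (le_csSup ?_ (mem_image_of_mem u hxcl)) (csSup_le ?_ ?_)
  · refine ⟨u x, ?_⟩; rintro a ⟨y, hy, rfl⟩; exact hmax y hy
  · exact ⟨u x, mem_image_of_mem u hxcl⟩
  · rintro a ⟨y, hy, rfl⟩; exact hmax y hy
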